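/- Let (X_ν)_{ν∈ℕ} and X₀ be nonempty closed L-pseudo-Lipschitz subsets of the pseudo-Euclidean space ℝ_{(l,p)} with L < 1, and assume X_ν converges to X₀ in the sense of Kuratowski. Write ρ_ν(x) := ρ(x,X_ν), ρ₀(x) := ρ(x,X₀), m_ν(x) := m(x,X_ν), m₀(x) := m(x,X₀). Then for every a ∈ ℝ^n: (i) for every sequence x_ν → a one has ρ_ν(x_ν) → ρ₀(a); (ii) if y_ν ∈ m_ν(a) and y_ν → y along a subsequence, then y ∈ m₀(a). -/

import Mathlib

open Filter Topology Set

noncomputable section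

/-- The pseudo-Euclidean space `ℝ_{(l,p)}`: `ℝ^(l+p)` with the Euclidean topology. -/
abbrev PE (l p : ℕ) := EuclideanSpace ℝ (Fin (l + p))

/-- The quadratic form `Q(x) = ‖x‖_l² − ‖x‖_p²`. -/
def Q (l p : ℕ) (x : PE l p) : ℝ :=
  ∑ i : Fin (l + p), if (i : ℕ) < l then (x i) ^ 2 else -((x i) ^ 2)

/-- The pseudo-scalar product `⟪x,y⟫ = Σ_{i<l} x_i y_i − Σ_{i≥l} x_i y_i`. -/
def pseudoInner (l p : ℕ) (x y : PE l p) : ℝ :=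
  ∑ i : Fin (l + p), if (i : ℕ) < l then x i * y i else -(x i * y i)

/-- `‖x‖_l`: the Euclidean norm of the first `l` coordinates. -/
def normL (l p : ℕ) (x : PE l p) : ℝ :=
  Real.sqrt (∑ i : Fin (l + p), if (i : ℕ) < l then (x i) ^ 2 else 0)

/-- `‖x‖_p`: the Euclidean norm of the last `p` coordinates. -/
def normP (l p : ℕ) (x : PE l p) : ℝ :=
  Real.sqrt (∑ i : Fin (l + p), if (i : ℕ) < l then 0 else (x i) ^ 2)

/-- `X` is acausal: `Q(x−y) > 0` for all distinct `x, y ∈ X`. -/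
def Acausal (l p : ℕ) (X : Set (PE l p)) : Prop :=
  ∀ x ∈ X, ∀ y ∈ X, x ≠ y → 0 < Q l p (x - y)

/-- `X` is `L`-pseudo-Lipschitz: `L‖x−y‖_l ≥ ‖x−y‖_p` for all `x, y ∈ X`. -/
def PseudoLipschitz (l p : ℕ) (L : ℝ) (X : Set (PE l p)) : Prop :=
  ∀ x ∈ X, ∀ y ∈ X, normP l p (x - y) ≤ L * normL l p (x - y)

/-- The squared-distance function `ρ(a,X) = inf {Q(x−a) : x ∈ X}`. -/
def rho (l p : ℕ) (X : Set (PE l p)) (a : PE l p) : ℝ :=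
  sInf ((fun x => Q l p (x - a)) '' X)

/-- The set of closest points `m(a) = {x ∈ X : Q(x−a) = ρ(a,X)}`, via its equivalent
description `m(a) = {x ∈ X : ∀ b ∈ X, Q(x−a) ≤ Q(b−a)}`. -/
def mm (l p : ℕ) (X : Set (PE l p)) (a : PE l p) : Set (PE l p) :=
  {x ∈ X | ∀ b ∈ X, Q l p (x - a) ≤ Q l p (b - a)}

/-- The medial axis `M_X`: points with at least two closest points in `X`. -/
def medialAxis (l p : ℕ) (X : Set (PE l p)) : Set (PE l p) :=
  {a | (mm l p X a).Nontrivial}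

/-- The vacant axis `W_X`: points with no closest point in `X`. -/
def vacantAxis (l p : ℕ) (X : Set (PE l p)) : Set (PE l p) :=
  {a | mm l p X a = ∅}

/-- The normal set `N(a) = {x : a ∈ m(x)}`. -/
def NN (l p : ℕ) (X : Set (PE l p)) (a : PE l p) : Set (PE l p) :=
  {x | a ∈ mm l p X x}

/-- The strict normal set `N'(a) = {x : m(x) = {a}}`. -/
def NN' (l p : ℕ) (X : Set (PE l p)) (a : PE l p) : Set (PE l p) :=
  {x | mm l p X x = {a}}

/-- Kuratowski convergence of a sequence of closed sets: (a) every `x ∈ X₀` is a limit of a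
sequence `x_ν ∈ X_ν`; (b) every convergent subsequence of points `x_{ν_j} ∈ X_{ν_j}` has its
limit in `X₀`. -/

lemma normL_sq (l p : ℕ) (x : PE l p) :
    normL l p x ^ 2 = ∑ i : Fin (l + p), if (i : ℕ) < l then (x i) ^ 2 else 0 := by
  rw [normL, Real.sq_sqrt]
  refine Finset.sum_nonneg fun i _ => ?_
  split_ifs <;> positivity

lemma normP_sq (l p : ℕ) (x : PE l p) :
    normP l p x ^ 2 = ∑ i : Fin (l + p), if (i : ℕ) < l then 0 else (x i) ^ 2 := by
  rw [normP, Real.sq_sqrt]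
  refine Finset.sum_nonneg fun i _ => ?_
  split_ifs <;> positivity

lemma Q_eq_norms (l p : ℕ) (x : PE l p) :
    Q l p x = normL l p x ^ 2 - normP l p x ^ 2 := by
  rw [normL_sq, normP_sq, Q, ← Finset.sum_sub_distrib]
  refine Finset.sum_congr rfl fun i _ => ?_
  split_ifs <;> ring

lemma norm_sq_eq (l p : ℕ) (x : PE l p) : ‖x‖ ^ 2 = ∑ i : Fin (l + p), (x i) ^ 2 := by
  rw [EuclideanSpace.norm_eq, Real.sq_sqrt (by positivity)]
  simp [sq_abs]

lemma norm_sq_eq' (l p : ℕ) (x : PE l p) :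
    ‖x‖ ^ 2 = normL l p x ^ 2 + normP l p x ^ 2 := by
  rw [norm_sq_eq, normL_sq, normP_sq, ← Finset.sum_add_distrib]
  refine Finset.sum_congr rfl fun i _ => ?_
  split_ifs <;> ring

lemma Q_add' (l p : ℕ) (u v : PE l p) :
    Q l p (u + v) = Q l p u + 2 * pseudoInner l p u v + Q l p v := by
  simp only [Q, pseudoInner, Finset.mul_sum, ← Finset.sum_add_distrib]
  refine Finset.sum_congr rfl fun i _ => ?_
  simp only [PiLp.add_apply]
  split_ifs <;> ring

lemma abs_pseudoInner_le (l p : ℕ) (u v : PE l p) :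
    |pseudoInner l p u v| ≤ ‖u‖ * ‖v‖ := by
  have h1 : pseudoInner l p u v
      = ∑ i : Fin (l + p), (if (i : ℕ) < l then u i else -(u i)) * v i := by
    refine Finset.sum_congr rfl fun i _ => ?_
    split_ifs <;> ring
  have h2 : (∑ i : Fin (l + p), (if (i : ℕ) < l then u i else -(u i)) ^ 2)
      = ∑ i : Fin (l + p), (u i) ^ 2 := by
    refine Finset.sum_congr rfl fun i _ => ?_
    split_ifs <;> ring
  have h3 := Finset.sum_mul_sq_le_sq_mul_sq Finset.univ
    (fun i : Fin (l + p) => if (i : ℕ) < l then u i else -(u i)) (fun i => v i)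
  rw [h2] at h3
  have h4 : |pseudoInner l p u v| ^ 2 ≤ (‖u‖ * ‖v‖) ^ 2 := by
    rw [sq_abs, mul_pow, norm_sq_eq, norm_sq_eq, h1]
    exact h3
  calc |pseudoInner l p u v| = Real.sqrt (|pseudoInner l p u v| ^ 2) :=
        (Real.sqrt_sq (abs_nonneg _)).symm
    _ ≤ Real.sqrt ((‖u‖ * ‖v‖) ^ 2) := Real.sqrt_le_sqrt h4
    _ = ‖u‖ * ‖v‖ := Real.sqrt_sq (by positivity)

lemma Q_continuous (l p : ℕ) : Continuous (Q l p) := by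
  unfold Q
  refine continuous_finset_sum _ fun i _ => ?_
  have hc : Continuous fun x : PE l p => x i := by
    exact (EuclideanSpace.proj i : EuclideanSpace ℝ (Fin (l+p)) →L[ℝ] ℝ).continuous
  by_cases h : (i : ℕ) < l
  · simp only [if_pos h]; exact hc.pow 2
  · simp only [if_neg h]; exact (hc.pow 2).neg

lemma neg_norm_sq_le_Q (l p : ℕ) (x : PE l p) : -‖x‖ ^ 2 ≤ Q l p x := by
  have h1 := Q_eq_norms l p x
  have h2 := norm_sq_eq' l p x
  nlinarith [sq_nonneg (normL l p x)]

lemma Q_lower {l p : ℕ} {L : ℝ} (hL0 : 0 ≤ L) (hL1 : L < 1) {X : Set (PE l p)}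
    (hlip : PseudoLipschitz l p L X) {x y : PE l p} (hx : x ∈ X) (hy : y ∈ X) :
    (1 - L ^ 2) / (1 + L ^ 2) * ‖x - y‖ ^ 2 ≤ Q l p (x - y) := by
  have hA : 0 ≤ normL l p (x - y) := Real.sqrt_nonneg _
  have hB : 0 ≤ normP l p (x - y) := Real.sqrt_nonneg _
  have hPL := hlip x hx y hy
  have hQ := Q_eq_norms l p (x - y)
  have hN := norm_sq_eq' l p (x - y)
  have h1 : (0:ℝ) < 1 + L ^ 2 := by positivity
  rw [div_mul_eq_mul_div, div_le_iff₀ h1]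
  nlinarith [mul_self_le_mul_self hB hPL]

lemma Q_key {l p : ℕ} {L : ℝ} (hL0 : 0 ≤ L) (hL1 : L < 1) {X : Set (PE l p)}
    (hlip : PseudoLipschitz l p L X) {x b : PE l p} (hx : x ∈ X) (hb : b ∈ X) (w : PE l p) :
    (1 - L ^ 2) / (1 + L ^ 2) * ‖x - b‖ ^ 2 - 2 * (‖x - b‖ * ‖b - w‖) - ‖b - w‖ ^ 2
      ≤ Q l p (x - w) := by
  have hsplit : x - w = (x - b) + (b - w) := (sub_add_sub_cancel x b w).symm
  rw [hsplit, Q_add']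
  have h1 := Q_lower hL0 hL1 hlip hx hb
  have h2 := abs_pseudoInner_le l p (x - b) (b - w)
  have h3 := neg_norm_sq_le_Q l p (b - w)
  have h4 := neg_abs_le (pseudoInner l p (x - b) (b - w))
  linarith
def KuratowskiTendsto (l p : ℕ) (Xs : ℕ → Set (PE l p)) (X₀ : Set (PE l p)) : Prop :=
  (∀ x ∈ X₀, ∃ xs : ℕ → PE l p, (∀ ν, xs ν ∈ Xs ν) ∧ Tendsto xs atTop (𝓝 x)) ∧
  (∀ φ : ℕ → ℕ, StrictMono φ → ∀ xs : ℕ → PE l p, (∀ j, xs j ∈ Xs (φ j)) →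
    ∀ x : PE l p, Tendsto xs atTop (𝓝 x) → x ∈ X₀)

/-- For nonempty closed `L`-pseudo-Lipschitz sets `X_ν → X₀` (Kuratowski,
`L < 1`) and any `a`: (i) `ρ_ν(x_ν) → ρ₀(a)` whenever `x_ν → a`; (ii) any limit of a
convergent subsequence of points `y_ν ∈ m_ν(a)` belongs to `m₀(a)`. -/
theorem rho_m_kuratowski_limit (l p : ℕ) (hl : 1 ≤ l) (L : ℝ) (hL : L < 1)
    (Xs : ℕ → Set (PE l p)) (X₀ : Set (PE l p))
    (hne : ∀ ν, (Xs ν).Nonempty) (hne₀ : X₀.Nonempty)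
    (hcl : ∀ ν, IsClosed (Xs ν)) (hcl₀ : IsClosed X₀)
    (hlip : ∀ ν, PseudoLipschitz l p L (Xs ν)) (hlip₀ : PseudoLipschitz l p L X₀)
    (hK : KuratowskiTendsto l p Xs X₀) (a : PE l p) :
    (∀ xs : ℕ → PE l p, Tendsto xs atTop (𝓝 a) →
      Tendsto (fun ν => rho l p (Xs ν) (xs ν)) atTop (𝓝 (rho l p X₀ a))) ∧
    (∀ φ : ℕ → ℕ, StrictMono φ → ∀ ys : ℕ → PE l p, (∀ j, ys j ∈ mm l p (Xs (φ j)) a) →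
      ∀ y : PE l p, Tendsto ys atTop (𝓝 y) → y ∈ mm l p X₀ a) := by
  classical
  set L' := max L 0 with hL'def
  have hL'0 : 0 ≤ L' := le_max_right _ _
  have hL'1 : L' < 1 := max_lt hL one_pos
  have hlipmax : ∀ X : Set (PE l p), PseudoLipschitz l p L X → PseudoLipschitz l p L' X := by
    intro X h x hx y hy
    exact (h x hx y hy).trans
      (mul_le_mul_of_nonneg_right (le_max_left _ _) (Real.sqrt_nonneg _))
  have hlip' : ∀ ν, PseudoLipschitz l p L' (Xs ν) := fun ν => hlipmax _ (hlip ν)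
  have hlip₀' : PseudoLipschitz l p L' X₀ := hlipmax _ hlip₀
  set c := (1 - L' ^ 2) / (1 + L' ^ 2) with hc
  have hc0 : 0 < c := div_pos (by nlinarith) (by positivity)
  -- lower bound for Q on the image sets
  have hlb : ∀ X : Set (PE l p), PseudoLipschitz l p L' X → ∀ b ∈ X, ∀ w : PE l p,
      ∀ x ∈ X, -(‖b - w‖ ^ 2 / c) - ‖b - w‖ ^ 2 ≤ Q l p (x - w) := by
    intro X hX b hb w x hx
    have hk := Q_key hL'0 hL'1 hX hx hb w
    rw [← hc] at hk
    set t := ‖x - b‖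
    set s := ‖b - w‖
    have h3 : -(s ^ 2) ≤ c * (c * t ^ 2 - 2 * (t * s)) := by nlinarith [sq_nonneg (c * t - s)]
    have h2 : -(s ^ 2 / c) ≤ c * t ^ 2 - 2 * (t * s) := by
      rw [← neg_div, div_le_iff₀ hc0]
      nlinarith
    linarith
  have hbdd : ∀ X : Set (PE l p), PseudoLipschitz l p L' X → X.Nonempty → ∀ w : PE l p,
      BddBelow ((fun x => Q l p (x - w)) '' X) := by
    rintro X hX ⟨b, hb⟩ w
    refine ⟨-(‖b - w‖ ^ 2 / c) - ‖b - w‖ ^ 2, ?_⟩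
    rintro q ⟨x, hx, rfl⟩
    exact hlb X hX b hb w x hx
  obtain ⟨b₀, hb₀⟩ := hne₀
  obtain ⟨bs₀, hbs₀mem, hbs₀tend⟩ := hK.1 b₀ hb₀
  constructor
  · -- part (i)
    intro xs hxs
    rw [Metric.tendsto_nhds]
    intro ε hε
    have hupper : ∀ᶠ ν in atTop, rho l p (Xs ν) (xs ν) < rho l p X₀ a + ε := by
      have hlt : sInf ((fun x => Q l p (x - a)) '' X₀) < rho l p X₀ a + ε / 2 := by
        have : rho l p X₀ a = sInf ((fun x => Q l p (x - a)) '' X₀) := rfl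
        linarith
      obtain ⟨q, ⟨b, hbX, rfl⟩, hq⟩ :=
        (csInf_lt_iff (hbdd X₀ hlip₀' ⟨b₀, hb₀⟩ a) (Set.Nonempty.image _ ⟨b₀, hb₀⟩)).1 hlt
      obtain ⟨bs, hbsmem, hbstend⟩ := hK.1 b hbX
      have hQtend : Tendsto (fun ν => Q l p (bs ν - xs ν)) atTop (𝓝 (Q l p (b - a))) := by
        have := ((Q_continuous l p).tendsto (b - a)).comp (hbstend.sub hxs)
        simpa [Function.comp_def] using this
      filter_upwards [hQtend.eventually
        (gt_mem_nhds (show Q l p (b - a) < rho l p X₀ a + ε by linarith))] with ν hν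
      exact lt_of_le_of_lt
        (csInf_le (hbdd _ (hlip' ν) (hne ν) (xs ν)) ⟨bs ν, hbsmem ν, rfl⟩) hν
    have hlower : ∀ᶠ ν in atTop, rho l p X₀ a - ε < rho l p (Xs ν) (xs ν) := by
      by_contra hcon
      rw [Filter.not_eventually] at hcon
      simp only [not_lt] at hcon
      obtain ⟨φ, hφ, hφle⟩ := Filter.extraction_of_frequently_atTop hcon
      have hzex : ∀ j, ∃ z ∈ Xs (φ j), Q l p (z - xs (φ j)) < rho l p X₀ a - ε / 2 := by
        intro j
        have h1 : sInf ((fun x => Q l p (x - xs (φ j))) '' Xs (φ j)) < rho l p X₀ a - ε / 2 := by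
          have h2 := hφle j
          have : rho l p (Xs (φ j)) (xs (φ j))
              = sInf ((fun x => Q l p (x - xs (φ j))) '' Xs (φ j)) := rfl
          linarith
        obtain ⟨q, ⟨z, hz, rfl⟩, hq⟩ := (csInf_lt_iff
          (hbdd _ (hlip' (φ j)) (hne _) _) (Set.Nonempty.image _ (hne _))).1 h1
        exact ⟨z, hz, hq⟩
      choose z hzmem hzlt using hzex
      have hφtop : Tendsto φ atTop atTop := hφ.tendsto_atTop
      have hstend : Tendsto (fun j => ‖bs₀ (φ j) - xs (φ j)‖) atTop (𝓝 ‖b₀ - a‖) := by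
        have := ((hbs₀tend.comp hφtop).sub (hxs.comp hφtop)).norm
        simpa [Function.comp] using this
      obtain ⟨S, hS⟩ := hstend.bddAbove_range
      have hSmem : ∀ j, ‖bs₀ (φ j) - xs (φ j)‖ ≤ S := fun j => hS ⟨j, rfl⟩
      have hS0 : 0 ≤ S := le_trans (norm_nonneg _) (hSmem 0)
      set M := |rho l p X₀ a| + 1 with hM
      have hM0 : (0:ℝ) ≤ M := by positivity
      have hQub : ∀ j, Q l p (z j - xs (φ j)) ≤ M := by
        intro j
        have := le_abs_self (rho l p X₀ a)
        linarith [hzlt j]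
      set T := S / c + Real.sqrt ((S ^ 2 + S ^ 2 / c + M) / c) with hT
      have htb : ∀ j, ‖z j - bs₀ (φ j)‖ ≤ T := by
        intro j
        have hk := Q_key hL'0 hL'1 (hlip' (φ j)) (hzmem j) (hbs₀mem (φ j)) (xs (φ j))
        rw [← hc] at hk
        set t := ‖z j - bs₀ (φ j)‖ with ht
        set s := ‖bs₀ (φ j) - xs (φ j)‖ with hs
        have ht0 : 0 ≤ t := norm_nonneg _
        have hs0 : 0 ≤ s := norm_nonneg _
        have hsS : s ≤ S := hSmem j
        have h1 : c * t ^ 2 - 2 * (t * s) - s ^ 2 ≤ M := le_trans hk (hQub j)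
        have h2 : c * t ^ 2 - 2 * (t * S) - S ^ 2 ≤ M := by nlinarith
        have h3 : c * (t - S / c) ^ 2 ≤ S ^ 2 + S ^ 2 / c + M := by
          have he : c * (t - S / c) ^ 2 = c * t ^ 2 - 2 * (t * S) + S ^ 2 / c := by
            field_simp
            ring
          linarith
        have h4 : (t - S / c) ^ 2 ≤ (S ^ 2 + S ^ 2 / c + M) / c := by
          rw [le_div_iff₀ hc0]
          nlinarith
        have h5 : t - S / c ≤ Real.sqrt ((S ^ 2 + S ^ 2 / c + M) / c) :=
          (le_abs_self _).trans (by rw [← Real.sqrt_sq_eq_abs]; exact Real.sqrt_le_sqrt h4)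
        rw [hT]
        linarith
      obtain ⟨B, hB⟩ := ((hbs₀tend.comp hφtop).norm).bddAbove_range
      have hzb : ∀ j, z j ∈ Metric.closedBall (0 : PE l p) (B + T) := by
        intro j
        rw [Metric.mem_closedBall, dist_zero_right]
        calc ‖z j‖ = ‖(z j - bs₀ (φ j)) + bs₀ (φ j)‖ := by rw [sub_add_cancel]
          _ ≤ ‖z j - bs₀ (φ j)‖ + ‖bs₀ (φ j)‖ := norm_add_le _ _
          _ ≤ T + B := add_le_add (htb j) (hB ⟨j, rfl⟩)
          _ = B + T := by ring
      obtain ⟨y, -, ψ, hψ, hytend⟩ :=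
        tendsto_subseq_of_bounded Metric.isBounded_closedBall hzb
      have hyX : y ∈ X₀ :=
        hK.2 (φ ∘ ψ) (hφ.comp hψ) (fun j => z (ψ j)) (fun j => hzmem (ψ j)) y hytend
      have hxtend2 : Tendsto (fun j => xs (φ (ψ j))) atTop (𝓝 a) := by
        have := (hxs.comp hφtop).comp hψ.tendsto_atTop
        simpa [Function.comp_def] using this
      have hQy : Tendsto (fun j => Q l p (z (ψ j) - xs (φ (ψ j)))) atTop
          (𝓝 (Q l p (y - a))) := by
        have := ((Q_continuous l p).tendsto (y - a)).comp (hytend.sub hxtend2)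
        simpa [Function.comp_def] using this
      have hle : Q l p (y - a) ≤ rho l p X₀ a - ε / 2 :=
        le_of_tendsto hQy (Filter.Eventually.of_forall fun j => (hzlt (ψ j)).le)
      have hge : rho l p X₀ a ≤ Q l p (y - a) :=
        csInf_le (hbdd X₀ hlip₀' ⟨b₀, hb₀⟩ a) ⟨y, hyX, rfl⟩
      linarith
    filter_upwards [hupper, hlower] with ν h1 h2
    rw [Real.dist_eq, abs_lt]
    constructor <;> linarith
  · -- part (ii)
    intro φ hφ ys hys y hy
    have hyX : y ∈ X₀ := hK.2 φ hφ ys (fun j => (hys j).1) y hy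
    refine ⟨hyX, fun b hb => ?_⟩
    obtain ⟨bs, hbsmem, hbstend⟩ := hK.1 b hb
    have h1 : ∀ j, Q l p (ys j - a) ≤ Q l p (bs (φ j) - a) := fun j =>
      (hys j).2 _ (hbsmem (φ j))
    have h2 : Tendsto (fun j => Q l p (ys j - a)) atTop (𝓝 (Q l p (y - a))) := by
      have := ((Q_continuous l p).tendsto (y - a)).comp (hy.sub tendsto_const_nhds)
      simpa [Function.comp_def] using this
    have h3 : Tendsto (fun j => Q l p (bs (φ j) - a)) atTop (𝓝 (Q l p (b - a))) := by
      have := ((Q_continuous l p).tendsto (b - a)).comp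
        ((hbstend.comp hφ.tendsto_atTop).sub tendsto_const_nhds)
      simpa [Function.comp_def] using this
    exact le_of_tendsto_of_tendsto' h2 h3 h1
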